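/- Let u : ℝ → ℝ be C^m near x* with u(x*) = x*, u'(x*) = 1, u^{(j)}(x*) = 0 for 2 ≤ j ≤ m-1, and u^{(m)}(x*) = α ≠ 0, where m ≥ 2. Define v(x) = (u(x) - x·u'(x)) / (1 - u'(x)) for x ≠ x* and v(x*) = x*. Then v is differentiable at x* with v'(x*) = 1 - 1/m, so 0 < v'(x*) < 1. -/

import Mathlib

open Filter Topology Set

private lemma aux_contDiffAt_deriv {n : ℕ} {h : ℝ → ℝ} {a : ℝ}
    (hc : ContDiffAt ℝ ((n : ℕ) + 1) h a) : ContDiffAt ℝ (n : ℕ) (deriv h) a := by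
  obtain ⟨s, hs, hcs⟩ := hc.contDiffOn le_rfl (by simp)
  obtain ⟨t, hts, hto, hat⟩ := mem_nhds_iff.1 hs
  have h2 : ContDiffOn ℝ (n : ℕ) (deriv h) t :=
    ((contDiffOn_succ_iff_deriv_of_isOpen hto).1 (hcs.mono hts)).2.2
  exact h2.contDiffAt (hto.mem_nhds hat)

private lemma aux_taylor_tendsto : ∀ (n : ℕ) (h : ℝ → ℝ) (a : ℝ),
    ContDiffAt ℝ (n : ℕ) h a → (∀ j < n, iteratedDeriv j h a = 0) →
    Filter.Tendsto (fun x => h x / (x - a) ^ n) (𝓝[≠] a)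
      (𝓝 (iteratedDeriv n h a / (Nat.factorial n : ℝ))) := by
  intro n
  induction n with
  | zero =>
    intro h a hc _
    simpa [iteratedDeriv_zero] using
      tendsto_nhdsWithin_of_tendsto_nhds hc.continuousAt.tendsto
  | succ n ih =>
    intro h a hc hz
    have hd : ContDiffAt ℝ (n : ℕ) (deriv h) a := aux_contDiffAt_deriv hc
    have hz' : ∀ j < n, iteratedDeriv j (deriv h) a = 0 := by
      intro j hj
      rw [← iteratedDeriv_succ']
      exact hz (j + 1) (by omega)
    have hIH := ih (deriv h) a hd hz'
    have hval : iteratedDeriv n (deriv h) a = iteratedDeriv (n + 1) h a := by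
      rw [iteratedDeriv_succ']
    rw [hval] at hIH
    -- eventual differentiability of h near a
    have hev : ∀ᶠ x in 𝓝 a, DifferentiableAt ℝ h x := by
      filter_upwards [hc.eventually (by simp)] with x hx
      exact hx.differentiableAt (by simp)
    have hff' : ∀ᶠ x in 𝓝[≠] a, HasDerivAt h (deriv h x) x := by
      filter_upwards [nhdsWithin_le_nhds hev] with x hx using hx.hasDerivAt
    have hgg' : ∀ᶠ x in 𝓝[≠] a,
        HasDerivAt (fun y => (y - a) ^ (n + 1)) (((n : ℝ) + 1) * (x - a) ^ n) x := by
      refine Filter.Eventually.of_forall fun x => ?_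
      have := ((hasDerivAt_id x).sub_const a).pow (n + 1)
      simpa [Pi.pow_def] using this
    have hg' : ∀ᶠ x in 𝓝[≠] a, ((n : ℝ) + 1) * (x - a) ^ n ≠ 0 := by
      filter_upwards [self_mem_nhdsWithin] with x hx
      have hxa : x ≠ a := hx
      exact mul_ne_zero (by positivity) (pow_ne_zero _ (sub_ne_zero.2 hxa))
    have hfa : Filter.Tendsto h (𝓝[≠] a) (𝓝 0) := by
      have h0 : h a = 0 := by simpa [iteratedDeriv_zero] using hz 0 (by omega)
      have := hc.continuousAt.tendsto
      rw [h0] at this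
      exact tendsto_nhdsWithin_of_tendsto_nhds this
    have hga : Filter.Tendsto (fun x => (x - a) ^ (n + 1)) (𝓝[≠] a) (𝓝 0) := by
      have : Filter.Tendsto (fun x : ℝ => (x - a) ^ (n + 1)) (𝓝 a) (𝓝 ((a - a) ^ (n + 1))) :=
        ((continuous_id.sub continuous_const).pow (n + 1)).tendsto a
      simpa using tendsto_nhdsWithin_of_tendsto_nhds this
    have hdiv : Filter.Tendsto (fun x => deriv h x / (((n : ℝ) + 1) * (x - a) ^ n)) (𝓝[≠] a)
        (𝓝 (iteratedDeriv (n + 1) h a / (Nat.factorial (n + 1) : ℝ))) := by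
      have h2 := hIH.div_const ((n : ℝ) + 1)
      have heq : ∀ x, deriv h x / (x - a) ^ n / ((n : ℝ) + 1)
          = deriv h x / (((n : ℝ) + 1) * (x - a) ^ n) := fun x => by
        rw [div_div, mul_comm]
      have hvv : iteratedDeriv (n + 1) h a / (Nat.factorial n : ℝ) / ((n : ℝ) + 1)
          = iteratedDeriv (n + 1) h a / (Nat.factorial (n + 1) : ℝ) := by
        rw [div_div]
        congr 1
        rw [Nat.factorial_succ]
        push_cast
        ring
      rw [← hvv]
      exact h2.congr heq
    exact HasDerivAt.lhopital_zero_nhdsNE hff' hgg' hg' hfa hga hdiv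

/-- under hypotheses (H), the continuously extended Newton map `v`
is differentiable at `x*` with `v'(x*) = 1 - 1/m ∈ (0,1)`. -/
theorem stmt_6 (m : ℕ) (hm : 2 ≤ m) (xs α : ℝ) (hα : α ≠ 0) (u v : ℝ → ℝ)
    (hu : ContDiffAt ℝ (m : ℕ∞) u xs) (hfix : u xs = xs) (hu1 : deriv u xs = 1)
    (hj : ∀ j, 2 ≤ j → j ≤ m - 1 → iteratedDeriv j u xs = 0)
    (hum : iteratedDeriv m u xs = α)
    (hv : ∀ x, x ≠ xs → v x = (u x - x * deriv u x) / (1 - deriv u x))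
    (hvfix : v xs = xs) :
    HasDerivAt v (1 - 1/(m:ℝ)) xs ∧ 0 < 1 - 1/(m:ℝ) ∧ 1 - 1/(m:ℝ) < 1 := by
  have hu' : ContDiffAt ℝ (m : ℕ) u xs := by exact_mod_cast hu
  set g : ℝ → ℝ := fun x => u x - x with hgdef
  have hgc : ContDiffAt ℝ (m : ℕ) g xs := hu'.sub contDiffAt_id
  -- eventual differentiability of u
  have hev : ∀ᶠ x in 𝓝 xs, DifferentiableAt ℝ u x := by
    filter_upwards [hu'.eventually (by simp)] with x hx
    exact hx.differentiableAt (by exact_mod_cast (by omega : m ≠ 0))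
  -- deriv g = deriv u - 1 near xs
  have h1 : deriv g =ᶠ[𝓝 xs] fun x => deriv u x - 1 := by
    filter_upwards [hev] with x hx
    exact ((hx.hasDerivAt.sub (hasDerivAt_id x))).deriv
  -- iterated derivatives of g in terms of u, for order ≥ 2
  have key : ∀ k : ℕ, iteratedDeriv (k + 2) g xs = iteratedDeriv (k + 2) u xs := by
    intro k
    have e0 : iteratedDeriv (k + 2) g xs = iteratedDeriv (k + 1) (deriv g) xs := by
      rw [iteratedDeriv_succ']
    rw [e0, h1.iteratedDeriv_eq (k + 1), iteratedDeriv_succ']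
    have e1 : deriv (fun x => deriv u x - 1) = deriv (deriv u) :=
      funext fun y => deriv_sub_const 1
    rw [e1, ← iteratedDeriv_succ', ← iteratedDeriv_succ']
  -- zero derivatives of g up to order m-1
  have hzg : ∀ j < m, iteratedDeriv j g xs = 0 := by
    intro j hjm
    match j with
    | 0 => simpa [iteratedDeriv_zero, hgdef] using sub_eq_zero.mpr hfix
    | 1 =>
      have hdu : DifferentiableAt ℝ u xs := hu'.differentiableAt
        (by exact_mod_cast (by omega : m ≠ 0))
      have : deriv g xs = deriv u xs - 1 := ((hdu.hasDerivAt.sub (hasDerivAt_id xs))).deriv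
      rw [iteratedDeriv_one, this, hu1, sub_self]
    | (k + 2) =>
      rw [key k]
      exact hj (k + 2) (by omega) (by omega)
  have hgm : iteratedDeriv m g xs = α := by
    have hmeq : m = (m - 2) + 2 := by omega
    rw [hmeq, key (m - 2), ← hmeq, hum]
  -- limit A : g x / (x - xs)^m → α / m!
  have A := aux_taylor_tendsto m g xs hgc hzg
  rw [hgm] at A
  -- ContDiffAt for deriv g at order m - 1
  have hdc : ContDiffAt ℝ ((m - 1 : ℕ)) (deriv g) xs := by
    apply aux_contDiffAt_deriv
    have : ((m - 1 : ℕ) : WithTop ℕ∞) + 1 = (m : ℕ) := by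
      have : (m - 1) + 1 = m := by omega
      rw [← this]
      push_cast
      ring
    rw [this]
    exact hgc
  have hz' : ∀ j < m - 1, iteratedDeriv j (deriv g) xs = 0 := by
    intro j hjm
    rw [← iteratedDeriv_succ']
    exact hzg (j + 1) (by omega)
  have B := aux_taylor_tendsto (m - 1) (deriv g) xs hdc hz'
  have hBval : iteratedDeriv (m - 1) (deriv g) xs = α := by
    rw [← iteratedDeriv_succ']
    have : (m - 1) + 1 = m := by omega
    rw [this, hgm]
  rw [hBval] at B
  -- denominators nonzero
  have hfac1 : ((Nat.factorial (m - 1) : ℝ)) ≠ 0 := by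
    exact_mod_cast Nat.factorial_ne_zero (m - 1)
  have hfacm : ((Nat.factorial m : ℝ)) ≠ 0 := by
    exact_mod_cast Nat.factorial_ne_zero m
  have hden : α / (Nat.factorial (m - 1) : ℝ) ≠ 0 := div_ne_zero hα hfac1
  have hmpos : (0 : ℝ) < m := by positivity
  have hm1 : (m : ℝ) ≠ 0 := ne_of_gt hmpos
  have hfactm : (Nat.factorial m : ℝ) = m * (Nat.factorial (m - 1) : ℝ) := by
    rw [← Nat.mul_factorial_pred (by omega : m ≠ 0)]
    push_cast
    ring
  have C := A.div B hden
  have hCval : (α / (Nat.factorial m : ℝ)) / (α / (Nat.factorial (m - 1) : ℝ)) = 1 / m := by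
    rw [hfactm]
    field_simp
  rw [hCval] at C
  -- deriv g eventually nonzero on punctured nbhd
  have hdgne : ∀ᶠ x in 𝓝[≠] xs, deriv g x ≠ 0 := by
    have := B.eventually_ne hden
    filter_upwards [this] with x hx hc
    apply hx
    rw [hc, zero_div]
  have hslope : Filter.Tendsto (slope v xs) (𝓝[≠] xs) (𝓝 (1 - 1 / (m : ℝ))) := by
    have hT : Filter.Tendsto
        (fun x => 1 - (g x / (x - xs) ^ m) / (deriv g x / (x - xs) ^ (m - 1)))
        (𝓝[≠] xs) (𝓝 (1 - 1 / (m : ℝ))) := tendsto_const_nhds.sub C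
    refine hT.congr' ?_
    filter_upwards [self_mem_nhdsWithin, nhdsWithin_le_nhds h1, hdgne] with x hx hdg hne
    have hxne : x ≠ xs := hx
    have hsx : x - xs ≠ 0 := sub_ne_zero.2 hxne
    have hpow : (x - xs) ^ (m - 1) ≠ 0 := pow_ne_zero _ hsx
    have hvx : v x = (u x - x * deriv u x) / (1 - deriv u x) := hv x hxne
    have hdu : deriv u x = deriv g x + 1 := by rw [hdg]; ring
    have hpm : (x - xs) ^ m = (x - xs) ^ (m - 1) * (x - xs) := by
      rw [← pow_succ]
      congr 1
      omega
    rw [slope_def_field, hvfix, hvx, hdu]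
    have hgx : g x = u x - x := rfl
    rw [hpm]
    field_simp [hne, hsx, hpow]
    ring
  refine ⟨hasDerivAt_iff_tendsto_slope.mpr hslope, ?_, ?_⟩
  · have h2 : (2 : ℝ) ≤ m := by exact_mod_cast hm
    have : 1 / (m : ℝ) < 1 := by
      rw [div_lt_one hmpos]
      linarith
    linarith
  · have : 0 < 1 / (m : ℝ) := by positivity
    linarith
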